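/- Suppose G is an open set in ℝⁿ and ω: G → [0,∞) is measurable. Let 0 < δ < 1 and 0 < p ≤ q < ∞. Then the following conditions are equivalent: (A) there is a constant C₁ > 0 such that ∫_G |u(x)|^q ω(x) dx ≤ C₁ |u|_{W^{δ,p}(G)}^q for every u ∈ C₀(G); (B) there is a constant C₂ > 0 such that ∫_K ω(x) dx ≤ C₂ · cap_{δ,p}(K, G)^{q/p} for every compact set K in G. In the implication from (A) to (B) one can take C₂ = C₁, and in the implication from (B) to (A) one can take C₁ = C₂ · 2^{3q + 2q/p} (1 − 2^{−p})^{−q/p}. -/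

import Mathlib

open MeasureTheory Metric Set
open scoped ENNReal NNReal BigOperators

noncomputable section

/-- Euclidean `n`-space. -/
abbrev Eucl (n : ℕ) : Type := EuclideanSpace ℝ (Fin n)

/-- `D` is a `c`-John domain (bounded or unbounded): an open connected set such that each
pair of points can be joined by a rectifiable curve, parametrized by arc length
(formalized as a `1`-Lipschitz parametrization on `[0, ℓ]`), along which
`dist(γ t, ∂D) ≥ min{t, ℓ - t}/c`. -/
def IsJohnDomain (n : ℕ) (c : ℝ) (D : Set (Eucl n)) : Prop :=
  IsOpen D ∧ IsConnected D ∧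
    ∀ x₁ ∈ D, ∀ x₂ ∈ D, ∃ ℓ : ℝ, 0 ≤ ℓ ∧ ∃ γ : ℝ → Eucl n,
      γ 0 = x₁ ∧ γ ℓ = x₂ ∧ (∀ t ∈ Icc (0:ℝ) ℓ, γ t ∈ D) ∧
      LipschitzOnWith 1 γ (Icc 0 ℓ) ∧
      ∀ t ∈ Icc (0:ℝ) ℓ, min t (ℓ - t) / c ≤ infDist (γ t) (frontier D)

/-- The ball `B(x, τ·dist(x, ∂G))`; by convention, if `∂G = ∅` (i.e. `G = ℝⁿ`)
it is all of `ℝⁿ`. -/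
def tauBall (n : ℕ) (τ : ℝ) (G : Set (Eucl n)) (x : Eucl n) : Set (Eucl n) :=
  {y : Eucl n | edist x y < ENNReal.ofReal τ * EMetric.infEdist x (frontier G)}

/-- The fractional kernel `|u x - u y|^p / |x - y|^(n + δp)` as an extended real. -/
def fracKernel (n : ℕ) (δ p : ℝ) (u : Eucl n → ℝ) (x y : Eucl n) : ℝ≥0∞ :=
  ENNReal.ofReal (|u x - u y| ^ p / dist x y ^ ((n : ℝ) + δ * p))

/-- The `p`-th power of the seminorm `|u|_{W^{δ,p}_τ(G)}`. -/
def fracEnergyTau (n : ℕ) (δ τ p : ℝ) (G : Set (Eucl n)) (u : Eucl n → ℝ) : ℝ≥0∞ :=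
  ∫⁻ x in G, ∫⁻ y in tauBall n τ G x, fracKernel n δ p u x y ∂volume ∂volume

/-- The `p`-th power of the seminorm `|u|_{W^{δ,p}(G)}`. -/
def fracEnergy (n : ℕ) (δ p : ℝ) (G : Set (Eucl n)) (u : Eucl n → ℝ) : ℝ≥0∞ :=
  ∫⁻ x in G, ∫⁻ y in G, fracKernel n δ p u x y ∂volume ∂volume

/-- The fractional `(δ,p)`-capacity of a compact set `K ⊆ G`:
`inf |u|_{W^{δ,p}(G)}^p` over `u ∈ C₀(G)` with `u ≥ 1` on `K`. -/
def fracCap (n : ℕ) (δ p : ℝ) (K G : Set (Eucl n)) : ℝ≥0∞ :=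
  ⨅ (u : Eucl n → ℝ) (_ : Continuous u) (_ : HasCompactSupport u) (_ : tsupport u ⊆ G)
    (_ : ∀ x ∈ K, 1 ≤ u x), fracEnergy n δ p G u

/-- The fractional `(δ,q,p)`-Hardy inequality holds in `G` with constant `C`. -/
def HasFracHardy (n : ℕ) (δ p q C : ℝ) (G : Set (Eucl n)) : Prop :=
  ∀ u : Eucl n → ℝ, Continuous u → HasCompactSupport u → tsupport u ⊆ G →
    (∫⁻ x in G, ENNReal.ofReal
        (|u x| ^ q / infDist x (frontier G) ^ (q * (δ + n * (1/q - 1/p)))) ∂volume)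
      ≤ ENNReal.ofReal C * fracEnergy n δ p G u ^ (q / p)

/-- The closed axis-parallel cube with center `z` and half side length `r`. -/
def cube (n : ℕ) (z : Eucl n) (r : ℝ) : Set (Eucl n) :=
  {x : Eucl n | ∀ i, |x i - z i| ≤ r}

/-- The quantity `|Q|^(-1-δ/n) ∫_Q |u - u_Q|` for the cube `Q = cube n z r`. -/
def aTerm (n : ℕ) (δ : ℝ) (u : Eucl n → ℝ) (z : Eucl n) (r : ℝ) : ℝ :=
  ((volume (cube n z r)).toReal) ^ (-(1:ℝ) - δ / n) *
    ∫ x in cube n z r, |u x - ⨍ y in cube n z r, u y ∂volume| ∂volume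

/-- The seminorm `|u|_{A^{δ,p}_κ(G)}`: the supremum, over families `𝒬` of pairwise
disjoint cubes `Q` (given by center-halfside pairs) with `κQ ⊆ G`, of the `L^p(G)`
norm of `∑_{Q ∈ 𝒬} (|Q|^(-1-δ/n) ∫_Q |u - u_Q|) χ_Q`. -/
def ASeminorm (n : ℕ) (κ δ p : ℝ) (G : Set (Eucl n)) (u : Eucl n → ℝ) : ℝ≥0∞ :=
  ⨆ (𝒬 : Set (Eucl n × ℝ)) (_ : ∀ c ∈ 𝒬, 0 < c.2 ∧ cube n c.1 (κ * c.2) ⊆ G)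
    (_ : ∀ c ∈ 𝒬, ∀ c' ∈ 𝒬, c ≠ c' → cube n c.1 c.2 ∩ cube n c'.1 c'.2 = ∅),
    (∫⁻ x in G,
        (∑' c : 𝒬, (cube n (c : Eucl n × ℝ).1 (c : Eucl n × ℝ).2).indicator
          (fun _ => ENNReal.ofReal (aTerm n δ u (c : Eucl n × ℝ).1 (c : Eucl n × ℝ).2)) x) ^ p
      ∂volume) ^ (1 / p)

/-- `Q` is a closed dyadic cube in `ℝⁿ`. -/
def IsDyadicCube (n : ℕ) (Q : Set (Eucl n)) : Prop :=
  ∃ (k : ℤ) (z : Fin n → ℤ),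
    Q = {x : Eucl n | ∀ i, (z i : ℝ) * (2:ℝ) ^ k ≤ x i ∧ x i ≤ ((z i : ℝ) + 1) * (2:ℝ) ^ k}

/-- `W` is a Whitney decomposition of the proper open set `G`: a countable family of
closed dyadic cubes with pairwise disjoint interiors whose union is `G`, with
`diam Q ≤ dist(Q, ∂G) ≤ 4 diam Q` for each cube `Q ∈ W`. -/
def IsWhitneyDecomposition (n : ℕ) (G : Set (Eucl n)) (W : Set (Set (Eucl n))) : Prop :=
  W.Countable ∧ (∀ Q ∈ W, IsDyadicCube n Q) ∧ ⋃₀ W = G ∧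
    (W.Pairwise fun Q R => interior Q ∩ interior R = ∅) ∧
    ∀ Q ∈ W, (∀ x ∈ Q, Metric.diam Q ≤ infDist x (frontier G)) ∧
      ∃ x ∈ Q, infDist x (frontier G) ≤ 4 * Metric.diam Q

/-- `lam` is an upper Assouad-type covering exponent for `E`: there is `C > 0` such
that for every `x ∈ E` and all `0 < r < R < 2 diam E`, the set `E ∩ B(x,R)` can be
covered by at most `C (R/r)^lam` balls centered in `E` of radius `r`. -/
def UpperAssouadBound (n : ℕ) (E : Set (Eucl n)) (lam : ℝ) : Prop :=
  ∃ C : ℝ, 0 < C ∧ ∀ x ∈ E, ∀ r R : ℝ, 0 < r → r < R →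
    ENNReal.ofReal R < 2 * EMetric.diam E →
    ∃ F : Finset (Eucl n), ↑F ⊆ E ∧ (F.card : ℝ) ≤ C * (R / r) ^ lam ∧
      E ∩ ball x R ⊆ ⋃ y ∈ F, ball y r

/-- The upper Assouad dimension of `E`. -/
def upperAssouadDim (n : ℕ) (E : Set (Eucl n)) : ℝ :=
  sInf {lam : ℝ | 0 ≤ lam ∧ UpperAssouadBound n E lam}

/-- `lam` is a lower Assouad-type exponent for `E`: there is `C > 0` such that for
every `x ∈ E` and all `0 < r < R < 2 diam E`, at least `C (R/r)^lam` balls centered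
in `E` of radius `r` are needed to cover `E ∩ B(x,R)`. -/
def LowerAssouadBound (n : ℕ) (E : Set (Eucl n)) (lam : ℝ) : Prop :=
  ∃ C : ℝ, 0 < C ∧ ∀ x ∈ E, ∀ r R : ℝ, 0 < r → r < R →
    ENNReal.ofReal R < 2 * EMetric.diam E →
    ∀ F : Finset (Eucl n), ↑F ⊆ E → (E ∩ ball x R ⊆ ⋃ y ∈ F, ball y r) →
      C * (R / r) ^ lam ≤ (F.card : ℝ)

/-- The lower Assouad dimension of `E`. -/
def lowerAssouadDim (n : ℕ) (E : Set (Eucl n)) : ℝ :=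
  sSup {lam : ℝ | 0 ≤ lam ∧ LowerAssouadBound n E lam}

end

noncomputable section

namespace St10

lemma abs_min_sub_min (c x y : ℝ) : |min c x - min c y| ≤ |x - y| := by
  rcases min_cases c x with ⟨h1, h2⟩ | ⟨h1, h2⟩ <;> rcases min_cases c y with ⟨h3, h4⟩ | ⟨h3, h4⟩ <;>
    rw [h1, h3] <;> rw [abs_le] <;>
    constructor <;>
    nlinarith [le_abs_self (x - y), neg_abs_le (x - y), abs_nonneg (x - y)]

lemma abs_max_sub_max (c x y : ℝ) : |max c x - max c y| ≤ |x - y| := by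
  rcases max_cases c x with ⟨h1, h2⟩ | ⟨h1, h2⟩ <;> rcases max_cases c y with ⟨h3, h4⟩ | ⟨h3, h4⟩ <;>
    rw [h1, h3] <;> rw [abs_le] <;>
    constructor <;>
    nlinarith [le_abs_self (x - y), neg_abs_le (x - y), abs_nonneg (x - y)]

/-- The truncation function at level `2^j`. -/
def phi (j : ℤ) (t : ℝ) : ℝ := min 1 (max 0 ((2:ℝ) ^ (1 - (j:ℝ)) * |t| - 1))

lemma phi_nonneg (j : ℤ) (t : ℝ) : 0 ≤ phi j t :=
  le_min zero_le_one (le_max_left _ _)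

lemma phi_le_one (j : ℤ) (t : ℝ) : phi j t ≤ 1 := min_le_left _ _

lemma phi_eq_one {j : ℤ} {t : ℝ} (h : (2:ℝ) ^ ((j:ℝ)) ≤ |t|) : phi j t = 1 := by
  have h2 : (2:ℝ) ^ (1 - (j:ℝ)) * (2:ℝ) ^ ((j:ℝ)) = 2 := by
    rw [← Real.rpow_add two_pos]; norm_num
  have hpos : (0:ℝ) < (2:ℝ) ^ (1 - (j:ℝ)) := Real.rpow_pos_of_pos two_pos _
  have : (2:ℝ) ≤ (2:ℝ) ^ (1 - (j:ℝ)) * |t| := by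
    calc (2:ℝ) = (2:ℝ) ^ (1 - (j:ℝ)) * (2:ℝ) ^ ((j:ℝ)) := h2.symm
    _ ≤ _ := by gcongr
  have h1 : (1:ℝ) ≤ (2:ℝ) ^ (1 - (j:ℝ)) * |t| - 1 := by linarith
  rw [phi, max_eq_right (by linarith), min_eq_left h1]

lemma phi_eq_zero {j : ℤ} {t : ℝ} (h : |t| ≤ (2:ℝ) ^ ((j:ℝ) - 1)) : phi j t = 0 := by
  have h2 : (2:ℝ) ^ (1 - (j:ℝ)) * (2:ℝ) ^ ((j:ℝ) - 1) = 1 := by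
    rw [← Real.rpow_add two_pos]; norm_num
  have hpos : (0:ℝ) < (2:ℝ) ^ (1 - (j:ℝ)) := Real.rpow_pos_of_pos two_pos _
  have : (2:ℝ) ^ (1 - (j:ℝ)) * |t| ≤ 1 := by
    calc (2:ℝ) ^ (1 - (j:ℝ)) * |t| ≤ (2:ℝ) ^ (1 - (j:ℝ)) * (2:ℝ) ^ ((j:ℝ) - 1) := by
          gcongr
      _ = 1 := h2
  rw [phi, max_eq_left (by linarith), min_eq_right zero_le_one]

lemma phi_zero (j : ℤ) : phi j 0 = 0 :=
  phi_eq_zero (by simpa using (Real.rpow_pos_of_pos two_pos ((j:ℝ) - 1)).le)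

lemma phi_lip (j : ℤ) (a b : ℝ) :
    |phi j a - phi j b| ≤ (2:ℝ) ^ (1 - (j:ℝ)) * |(|a| - |b|)| := by
  calc |phi j a - phi j b|
      ≤ |max 0 ((2:ℝ) ^ (1 - (j:ℝ)) * |a| - 1) - max 0 ((2:ℝ) ^ (1 - (j:ℝ)) * |b| - 1)| :=
        abs_min_sub_min _ _ _
    _ ≤ |((2:ℝ) ^ (1 - (j:ℝ)) * |a| - 1) - ((2:ℝ) ^ (1 - (j:ℝ)) * |b| - 1)| :=
        abs_max_sub_max _ _ _
    _ = (2:ℝ) ^ (1 - (j:ℝ)) * |(|a| - |b|)| := by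
        rw [show ((2:ℝ) ^ (1 - (j:ℝ)) * |a| - 1) - ((2:ℝ) ^ (1 - (j:ℝ)) * |b| - 1)
            = (2:ℝ) ^ (1 - (j:ℝ)) * (|a| - |b|) by ring, abs_mul,
          abs_of_pos (Real.rpow_pos_of_pos two_pos (1 - (j:ℝ)))]
    _ ≤ _ := le_rfl

lemma phi_ne_imp {j : ℤ} {a b : ℝ} (h : phi j a ≠ phi j b) :
    (2:ℝ) ^ ((j:ℝ) - 1) < max |a| |b| ∧ min |a| |b| < (2:ℝ) ^ ((j:ℝ)) := by
  constructor
  · by_contra hc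
    push_neg at hc
    rw [phi_eq_zero ((le_max_left _ _).trans hc), phi_eq_zero ((le_max_right _ _).trans hc)] at h
    exact h rfl
  · by_contra hc
    push_neg at hc
    rw [phi_eq_one (hc.trans (min_le_left _ _)), phi_eq_one (hc.trans (min_le_right _ _))] at h
    exact h rfl


lemma key_sum {p : ℝ} (hp : 0 < p) (a b : ℝ) :
    ∑' j : ℤ, ENNReal.ofReal ((2:ℝ) ^ ((j:ℝ) * p) * |phi j a - phi j b| ^ p)
      ≤ ENNReal.ofReal ((2:ℝ) ^ (p + 2) * (1 - (2:ℝ) ^ (-p))⁻¹ * |a - b| ^ p) := by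
  set d : ℝ := |(|a| - |b|)| with hd_def
  have hd0 : 0 ≤ d := abs_nonneg _
  rcases eq_or_lt_of_le hd0 with hd | hd
  · -- degenerate case: |a| = |b|
    have hab : |a| = |b| := by
      have := abs_eq_zero.1 hd.symm; linarith [this]
    have hphi : ∀ j : ℤ, phi j a = phi j b := fun j => by rw [phi, phi, hab]
    have : ∀ j : ℤ, ENNReal.ofReal ((2:ℝ) ^ ((j:ℝ) * p) * |phi j a - phi j b| ^ p) = 0 := by
      intro j
      rw [hphi j, sub_self, abs_zero, Real.zero_rpow hp.ne', mul_zero, ENNReal.ofReal_zero]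
    simp only [this, tsum_zero]
    exact zero_le
  · -- main case
    have h2d : (0:ℝ) < 2 * d := by linarith
    set j₀ : ℤ := ⌊Real.logb 2 (2 * d)⌋ with hj₀_def
    have hlogb : (2:ℝ) ^ Real.logb 2 (2 * d) = 2 * d :=
      Real.rpow_logb two_pos (by norm_num) h2d
    have hj₀le : (2:ℝ) ^ ((j₀:ℝ)) ≤ 2 * d := by
      calc (2:ℝ) ^ ((j₀:ℝ)) ≤ (2:ℝ) ^ Real.logb 2 (2 * d) :=
            Real.rpow_le_rpow_of_exponent_le one_le_two (Int.floor_le _)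
        _ = 2 * d := hlogb
    have hj₀gt : d < (2:ℝ) ^ ((j₀:ℝ)) := by
      have h1 : Real.logb 2 (2 * d) - 1 < (j₀:ℝ) := Int.sub_one_lt_floor _
      have h2 : (2:ℝ) ^ (Real.logb 2 (2 * d) - 1) < (2:ℝ) ^ ((j₀:ℝ)) :=
        Real.rpow_lt_rpow_of_exponent_lt one_lt_two h1
      have h3 : (2:ℝ) ^ (Real.logb 2 (2 * d) - 1) = d := by
        rw [Real.rpow_sub two_pos, hlogb, Real.rpow_one]; ring
      linarith
    have hM : (0:ℝ) < max |a| |b| := by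
      have : d ≤ max |a| |b| := by
        rcases le_total (|a|) (|b|) with h | h
        · rw [hd_def, abs_of_nonpos (show |a| - |b| ≤ 0 by linarith), max_eq_right h]
          nlinarith [abs_nonneg a, abs_nonneg b]
        · rw [hd_def, abs_of_nonneg (show (0:ℝ) ≤ |a| - |b| by linarith), max_eq_left h]
          nlinarith [abs_nonneg a, abs_nonneg b]
      linarith
    set j₁ : ℤ := ⌊Real.logb 2 (max |a| |b|)⌋ with hj₁_def
    set c : ℝ≥0∞ := ENNReal.ofReal ((2:ℝ) ^ p * d ^ p) with hc_def
    set F : ℤ → ℝ≥0∞ := fun j =>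
      ({j : ℤ | j ≤ j₀}).indicator (fun j => ENNReal.ofReal ((2:ℝ) ^ ((j:ℝ) * p))) j +
        ({j₁, j₁ + 1} : Set ℤ).indicator (fun _ => c) j with hF_def
    have hFb : ∀ j : ℤ,
        ENNReal.ofReal ((2:ℝ) ^ ((j:ℝ) * p) * |phi j a - phi j b| ^ p) ≤ F j := by
      intro j
      by_cases hΔ : phi j a = phi j b
      · rw [hΔ, sub_self, abs_zero, Real.zero_rpow hp.ne', mul_zero, ENNReal.ofReal_zero]
        exact zero_le
      · have hcond := phi_ne_imp hΔ
        by_cases hj : j ≤ j₀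
        · -- small j: bound by 2^{jp}
          have hΔ1 : |phi j a - phi j b| ≤ 1 := by
            rw [abs_le]
            constructor <;>
              nlinarith [phi_nonneg j a, phi_nonneg j b, phi_le_one j a, phi_le_one j b]
          have hb : ENNReal.ofReal ((2:ℝ) ^ ((j:ℝ) * p) * |phi j a - phi j b| ^ p)
              ≤ ENNReal.ofReal ((2:ℝ) ^ ((j:ℝ) * p)) := by
            apply ENNReal.ofReal_le_ofReal
            have h1 : |phi j a - phi j b| ^ p ≤ 1 :=
              Real.rpow_le_one (abs_nonneg _) hΔ1 hp.le
            nlinarith [Real.rpow_pos_of_pos two_pos ((j:ℝ) * p)]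
          calc ENNReal.ofReal ((2:ℝ) ^ ((j:ℝ) * p) * |phi j a - phi j b| ^ p)
              ≤ ({j : ℤ | j ≤ j₀}).indicator
                  (fun j => ENNReal.ofReal ((2:ℝ) ^ ((j:ℝ) * p))) j := by
                rw [Set.indicator_of_mem (by exact hj)]
                exact hb
            _ ≤ F j := self_le_add_right _ _
        · -- large j: at most two terms
          push_neg at hj
          have hj' : (j₀:ℝ) ≤ (j:ℝ) - 1 := by
            have h : ((j₀ + 1 : ℤ) : ℝ) ≤ ((j : ℤ) : ℝ) := by
              exact_mod_cast Int.add_one_le_of_lt hj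
            push_cast at h
            linarith
          have hdlt : d < (2:ℝ) ^ ((j:ℝ) - 1) :=
            lt_of_lt_of_le hj₀gt (Real.rpow_le_rpow_of_exponent_le one_le_two hj')
          -- value bound
          have hlip : |phi j a - phi j b| ≤ (2:ℝ) ^ (1 - (j:ℝ)) * d := phi_lip j a b
          have hval : ENNReal.ofReal ((2:ℝ) ^ ((j:ℝ) * p) * |phi j a - phi j b| ^ p) ≤ c := by
            rw [hc_def]
            apply ENNReal.ofReal_le_ofReal
            have h1 : |phi j a - phi j b| ^ p ≤ ((2:ℝ) ^ (1 - (j:ℝ)) * d) ^ p :=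
              Real.rpow_le_rpow (abs_nonneg _) hlip hp.le
            have h2 : ((2:ℝ) ^ (1 - (j:ℝ)) * d) ^ p
                = (2:ℝ) ^ ((1 - (j:ℝ)) * p) * d ^ p := by
              rw [Real.mul_rpow (Real.rpow_pos_of_pos two_pos _).le hd0,
                ← Real.rpow_mul two_pos.le]
            have h3 : (2:ℝ) ^ ((j:ℝ) * p) * ((2:ℝ) ^ ((1 - (j:ℝ)) * p) * d ^ p)
                = (2:ℝ) ^ p * d ^ p := by
              rw [← mul_assoc, ← Real.rpow_add two_pos]
              ring_nf
            nlinarith [Real.rpow_pos_of_pos two_pos ((j:ℝ) * p),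
              Real.rpow_nonneg hd0 p, Real.rpow_pos_of_pos two_pos ((1 - (j:ℝ)) * p),
              Real.rpow_pos_of_pos two_pos p]
          -- membership
          have hmem : j ∈ ({j₁, j₁ + 1} : Set ℤ) := by
            have hMm : max |a| |b| = min |a| |b| + d := by
              rw [hd_def]
              rcases le_total (|a|) (|b|) with h | h
              · rw [max_eq_right h, min_eq_left h,
                  abs_of_nonpos (show |a| - |b| ≤ 0 by linarith)]; ring
              · rw [max_eq_left h, min_eq_right h,
                  abs_of_nonneg (show (0:ℝ) ≤ |a| - |b| by linarith)]; ring
            have hup : max |a| |b| < (2:ℝ) ^ ((j:ℝ) + 1) := by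
              have h1 : (2:ℝ) ^ ((j:ℝ)) + (2:ℝ) ^ ((j:ℝ) - 1) ≤ (2:ℝ) ^ ((j:ℝ) + 1) := by
                have e1 : (2:ℝ) ^ ((j:ℝ) + 1) = 2 * (2:ℝ) ^ ((j:ℝ)) := by
                  rw [Real.rpow_add two_pos, Real.rpow_one]; ring
                have e2 : (2:ℝ) ^ ((j:ℝ) - 1) ≤ (2:ℝ) ^ ((j:ℝ)) :=
                  Real.rpow_le_rpow_of_exponent_le one_le_two (by linarith)
                linarith
              linarith [hcond.2, hMm, hdlt]
            have hlo : (2:ℝ) ^ ((j:ℝ) - 1) < max |a| |b| := hcond.1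
            have hLlo : (j:ℝ) - 1 < Real.logb 2 (max |a| |b|) :=
              (Real.lt_logb_iff_rpow_lt one_lt_two hM).2 hlo
            have hLup : Real.logb 2 (max |a| |b|) < (j:ℝ) + 1 :=
              (Real.logb_lt_iff_lt_rpow one_lt_two hM).2 hup
            have h1 : j₁ ≤ j := by
              have h0 : (j₁:ℝ) < (j:ℝ) + 1 := lt_of_le_of_lt (Int.floor_le _) hLup
              have h0' : (j₁:ℝ) < ((j + 1 : ℤ) : ℝ) := by push_cast; linarith
              have h0'' : j₁ < j + 1 := by exact_mod_cast h0'
              omega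
            have h2 : j ≤ j₁ + 1 := by
              have : (j:ℝ) - 1 ≤ Real.logb 2 (max |a| |b|) := hLlo.le
              have h3 : ((j - 1 : ℤ) : ℝ) ≤ Real.logb 2 (max |a| |b|) := by push_cast; linarith
              have := Int.le_floor.2 h3
              omega
            have : j = j₁ ∨ j = j₁ + 1 := by omega
            rcases this with h | h <;> simp [h]
          calc ENNReal.ofReal ((2:ℝ) ^ ((j:ℝ) * p) * |phi j a - phi j b| ^ p)
              ≤ ({j₁, j₁ + 1} : Set ℤ).indicator (fun _ => c) j := by
                rw [Set.indicator_of_mem hmem]; exact hval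
            _ ≤ F j := self_le_add_left _ _
    -- sum the bound
    have hsum1 : ∑' j : ℤ,
        ({j : ℤ | j ≤ j₀}).indicator (fun j => ENNReal.ofReal ((2:ℝ) ^ ((j:ℝ) * p))) j
        = ENNReal.ofReal ((2:ℝ) ^ ((j₀:ℝ) * p)) * (1 - ENNReal.ofReal ((2:ℝ) ^ (-p)))⁻¹ := by
      have hg : Function.Injective (fun k : ℕ => j₀ - (k:ℤ)) := by
        intro k₁ k₂ h; simpa using h
      have hsupp : Function.support
          (({j : ℤ | j ≤ j₀}).indicator (fun j => ENNReal.ofReal ((2:ℝ) ^ ((j:ℝ) * p))))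
          ⊆ Set.range (fun k : ℕ => j₀ - (k:ℤ)) := by
        intro j hjs
        have hj : j ≤ j₀ := by
          by_contra hjc
          exact hjs (Set.indicator_of_notMem (by exact hjc) _)
        refine ⟨(j₀ - j).toNat, ?_⟩
        show j₀ - ((j₀ - j).toNat : ℤ) = j
        omega
      rw [← Function.Injective.tsum_eq hg hsupp]
      have heval : ∀ k : ℕ,
          ({j : ℤ | j ≤ j₀}).indicator (fun j => ENNReal.ofReal ((2:ℝ) ^ ((j:ℝ) * p)))
            (j₀ - (k:ℤ))
          = ENNReal.ofReal ((2:ℝ) ^ ((j₀:ℝ) * p)) * ENNReal.ofReal ((2:ℝ) ^ (-p)) ^ k := by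
        intro k
        rw [Set.indicator_of_mem
          (show j₀ - (k:ℤ) ∈ {j : ℤ | j ≤ j₀} by simp only [Set.mem_setOf_eq]; omega)]
        rw [← ENNReal.ofReal_pow (Real.rpow_nonneg two_pos.le _),
          ← ENNReal.ofReal_mul (Real.rpow_nonneg two_pos.le _)]
        congr 1
        rw [← Real.rpow_natCast ((2:ℝ) ^ (-p)) k, ← Real.rpow_mul two_pos.le,
          ← Real.rpow_add two_pos]
        push_cast
        ring_nf
      simp only [heval]
      rw [ENNReal.tsum_mul_left, ENNReal.tsum_geometric]
    have hr1 : (1 - ENNReal.ofReal ((2:ℝ) ^ (-p)))⁻¹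
        = ENNReal.ofReal ((1 - (2:ℝ) ^ (-p))⁻¹) := by
      have hlt : (2:ℝ) ^ (-p) < 1 :=
        Real.rpow_lt_one_of_one_lt_of_neg one_lt_two (by linarith)
      rw [ENNReal.ofReal_inv_of_pos (by linarith), ENNReal.ofReal_sub _ (by positivity),
        ENNReal.ofReal_one]
    have hsum2 : ∑' j : ℤ, ({j₁, j₁ + 1} : Set ℤ).indicator (fun _ => c) j ≤ 2 * c := by
      have : ∑' j : ℤ, ({j₁, j₁ + 1} : Set ℤ).indicator (fun _ => c) j
          = ∑ j ∈ ({j₁, j₁ + 1} : Finset ℤ), ({j₁, j₁ + 1} : Set ℤ).indicator (fun _ => c) j := by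
        apply tsum_eq_sum
        intro j hj
        apply Set.indicator_of_notMem
        simpa using hj
      rw [this]
      calc ∑ j ∈ ({j₁, j₁ + 1} : Finset ℤ), ({j₁, j₁ + 1} : Set ℤ).indicator (fun _ => c) j
          ≤ ∑ j ∈ ({j₁, j₁ + 1} : Finset ℤ), c := by
            apply Finset.sum_le_sum
            intro j _
            exact Set.indicator_le_self' (fun _ _ => zero_le) j
        _ ≤ 2 * c := by
            rw [Finset.sum_const, nsmul_eq_mul]
            have hcard : ({j₁, j₁ + 1} : Finset ℤ).card ≤ 2 :=
              le_trans (Finset.card_insert_le _ _) (by simp)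
            gcongr
            exact_mod_cast hcard
    calc ∑' j : ℤ, ENNReal.ofReal ((2:ℝ) ^ ((j:ℝ) * p) * |phi j a - phi j b| ^ p)
        ≤ ∑' j : ℤ, F j := ENNReal.tsum_le_tsum hFb
      _ = (∑' j : ℤ,
            ({j : ℤ | j ≤ j₀}).indicator (fun j => ENNReal.ofReal ((2:ℝ) ^ ((j:ℝ) * p))) j)
          + ∑' j : ℤ, ({j₁, j₁ + 1} : Set ℤ).indicator (fun _ => c) j := ENNReal.tsum_add
      _ ≤ ENNReal.ofReal ((2:ℝ) ^ ((j₀:ℝ) * p)) * ENNReal.ofReal ((1 - (2:ℝ) ^ (-p))⁻¹)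
          + 2 * c := by
            rw [hsum1, hr1]
            exact add_le_add le_rfl hsum2
      _ ≤ ENNReal.ofReal ((2:ℝ) ^ (p + 2) * (1 - (2:ℝ) ^ (-p))⁻¹ * |a - b| ^ p) := by
          have hdab : d ≤ |a - b| := abs_abs_sub_abs_le_abs_sub a b
          have hdp : d ^ p ≤ |a - b| ^ p := Real.rpow_le_rpow hd0 hdab hp.le
          have hj₀p : (2:ℝ) ^ ((j₀:ℝ) * p) ≤ (2:ℝ) ^ p * d ^ p := by
            have h1 : (2:ℝ) ^ ((j₀:ℝ) * p) = ((2:ℝ) ^ ((j₀:ℝ))) ^ p :=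
              Real.rpow_mul two_pos.le _ _
            have h2 : ((2:ℝ) ^ ((j₀:ℝ))) ^ p ≤ (2 * d) ^ p :=
              Real.rpow_le_rpow (Real.rpow_pos_of_pos two_pos _).le hj₀le hp.le
            have h3 : ((2:ℝ) * d) ^ p = 2 ^ p * d ^ p := Real.mul_rpow two_pos.le hd0
            rw [h1]
            rw [h3] at h2
            exact h2
          have hIpos : (0:ℝ) < 1 - (2:ℝ) ^ (-p) := by
            have : (2:ℝ) ^ (-p) < 1 :=
              Real.rpow_lt_one_of_one_lt_of_neg one_lt_two (by linarith)
            linarith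
          have hI1 : (1:ℝ) ≤ (1 - (2:ℝ) ^ (-p))⁻¹ := by
            have h0 : 1 - (2:ℝ) ^ (-p) ≤ 1 := by
              nlinarith [Real.rpow_pos_of_pos two_pos (-p)]
            have h1 := inv_anti₀ hIpos h0
            simpa using h1
          rw [← ENNReal.ofReal_mul (Real.rpow_nonneg two_pos.le _), hc_def]
          have h2c : (2:ℝ≥0∞) * ENNReal.ofReal ((2:ℝ) ^ p * d ^ p)
              = ENNReal.ofReal (2 * ((2:ℝ) ^ p * d ^ p)) := by
            rw [ENNReal.ofReal_mul (by norm_num : (0:ℝ) ≤ 2), ENNReal.ofReal_ofNat]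
          rw [h2c, ← ENNReal.ofReal_add (by positivity) (by positivity)]
          apply ENNReal.ofReal_le_ofReal
          have h4 : (2:ℝ) ^ (p + 2) = 4 * (2:ℝ) ^ p := by
            have h42 : (2:ℝ) ^ (2:ℝ) = 4 := by
              rw [show (2:ℝ) ^ (2:ℝ) = (2:ℝ) ^ ((2:ℕ):ℝ) by norm_num, Real.rpow_natCast]
              norm_num
            rw [Real.rpow_add two_pos, h42]
            ring
          have hXpos : (0:ℝ) < (2:ℝ) ^ p := Real.rpow_pos_of_pos two_pos p
          have hdpn : (0:ℝ) ≤ d ^ p := Real.rpow_nonneg hd0 p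
          have hDn : (0:ℝ) ≤ |a - b| ^ p := Real.rpow_nonneg (abs_nonneg _) p
          set I : ℝ := (1 - (2:ℝ) ^ (-p))⁻¹ with hI_def
          set X : ℝ := (2:ℝ) ^ p with hX_def
          set D : ℝ := |a - b| ^ p with hD_def
          have hIn : (0:ℝ) ≤ I := by linarith
          have c1 : (2:ℝ) ^ ((j₀:ℝ) * p) * I ≤ X * d ^ p * I :=
            mul_le_mul_of_nonneg_right hj₀p hIn
          have c2 : X * d ^ p * I ≤ X * D * I :=
            mul_le_mul_of_nonneg_right (mul_le_mul_of_nonneg_left hdp hXpos.le) hIn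
          have c3 : 2 * (X * d ^ p) ≤ 2 * (X * D) := by
            nlinarith [mul_le_mul_of_nonneg_left hdp hXpos.le]
          have c4 : X * D ≤ X * D * I := le_mul_of_one_le_right (by positivity) hI1
          have c5 : (0:ℝ) ≤ X * D * I := by positivity
          rw [h4]
          nlinarith [c1, c2, c3, c4, c5]


lemma continuous_phi (j : ℤ) : Continuous (phi j) := by
  unfold phi
  exact continuous_const.min (continuous_const.max
    ((continuous_const.mul continuous_abs).sub continuous_const))

lemma CC_nonneg {p : ℝ} (hp : 0 < p) :
    (0:ℝ) ≤ (2:ℝ) ^ (p + 2) * (1 - (2:ℝ) ^ (-p))⁻¹ := by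
  have hlt : (2:ℝ) ^ (-p) < 1 :=
    Real.rpow_lt_one_of_one_lt_of_neg one_lt_two (by linarith)
  have h1 : (0:ℝ) < 1 - (2:ℝ) ^ (-p) := by linarith
  positivity

lemma key_kernel {n : ℕ} {δ p : ℝ} (hp : 0 < p) (u : Eucl n → ℝ) (x y : Eucl n) :
    ∑' j : ℤ, ENNReal.ofReal ((2:ℝ) ^ ((j:ℝ) * p)) * fracKernel n δ p (fun z => phi j (u z)) x y
      ≤ ENNReal.ofReal ((2:ℝ) ^ (p + 2) * (1 - (2:ℝ) ^ (-p))⁻¹) * fracKernel n δ p u x y := by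
  by_cases hxy : dist x y = 0
  · have hx : x = y := by rwa [dist_eq_zero] at hxy
    subst hx
    have hz : ∀ (v : Eucl n → ℝ), fracKernel n δ p v x x = 0 := by
      intro v
      rw [fracKernel, sub_self, abs_zero, Real.zero_rpow hp.ne', zero_div, ENNReal.ofReal_zero]
    simp only [hz, mul_zero, tsum_zero, le_refl]
  · have hdpos : 0 < dist x y := lt_of_le_of_ne dist_nonneg (Ne.symm hxy)
    set D : ℝ := dist x y ^ ((n : ℝ) + δ * p) with hD_def
    have hDpos : 0 < D := Real.rpow_pos_of_pos hdpos _
    have hterm : ∀ j : ℤ,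
        ENNReal.ofReal ((2:ℝ) ^ ((j:ℝ) * p)) * fracKernel n δ p (fun z => phi j (u z)) x y
          = ENNReal.ofReal ((2:ℝ) ^ ((j:ℝ) * p) * |phi j (u x) - phi j (u y)| ^ p)
              / ENNReal.ofReal D := by
      intro j
      rw [fracKernel, ENNReal.ofReal_div_of_pos hDpos, ← mul_div_assoc,
        ← ENNReal.ofReal_mul (Real.rpow_nonneg two_pos.le _)]
    have hrhs : ENNReal.ofReal ((2:ℝ) ^ (p + 2) * (1 - (2:ℝ) ^ (-p))⁻¹) * fracKernel n δ p u x y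
        = ENNReal.ofReal ((2:ℝ) ^ (p + 2) * (1 - (2:ℝ) ^ (-p))⁻¹ * |u x - u y| ^ p)
            / ENNReal.ofReal D := by
      rw [fracKernel, ENNReal.ofReal_div_of_pos hDpos, ← mul_div_assoc,
        ← ENNReal.ofReal_mul (CC_nonneg hp)]
    simp only [hterm, hrhs, div_eq_mul_inv]
    rw [ENNReal.tsum_mul_right]
    exact mul_le_mul' (key_sum hp (u x) (u y)) le_rfl

lemma kernel_measurable {n : ℕ} {δ p : ℝ} (v : Eucl n → ℝ) (hv : Continuous v) :
    Measurable (fun z : Eucl n × Eucl n => fracKernel n δ p v z.1 z.2) := by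
  apply Measurable.ennreal_ofReal
  apply Measurable.div
  · exact (((hv.comp continuous_fst).sub (hv.comp continuous_snd)).abs.measurable).pow
      measurable_const
  · exact (continuous_dist.measurable).pow measurable_const

lemma key_energy {n : ℕ} {δ p : ℝ} (hp : 0 < p) {G : Set (Eucl n)} (u : Eucl n → ℝ)
    (hu : Continuous u) :
    ∑' j : ℤ, ENNReal.ofReal ((2:ℝ) ^ ((j:ℝ) * p)) * fracEnergy n δ p G (fun z => phi j (u z))
      ≤ ENNReal.ofReal ((2:ℝ) ^ (p + 2) * (1 - (2:ℝ) ^ (-p))⁻¹) * fracEnergy n δ p G u := by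
  have hker : ∀ j : ℤ, Measurable
      (fun z : Eucl n × Eucl n => fracKernel n δ p (fun w => phi j (u w)) z.1 z.2) :=
    fun j => kernel_measurable _ ((continuous_phi j).comp hu)
  have h1 : ∀ j : ℤ,
      ENNReal.ofReal ((2:ℝ) ^ ((j:ℝ) * p)) * fracEnergy n δ p G (fun z => phi j (u z))
        = ∫⁻ x in G, ∫⁻ y in G,
            ENNReal.ofReal ((2:ℝ) ^ ((j:ℝ) * p))
              * fracKernel n δ p (fun z => phi j (u z)) x y ∂volume ∂volume := by
    intro j
    rw [fracEnergy, ← lintegral_const_mul' _ _ ENNReal.ofReal_ne_top]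
    congr 1
    funext x
    rw [← lintegral_const_mul' _ _ ENNReal.ofReal_ne_top]
  calc ∑' j : ℤ, ENNReal.ofReal ((2:ℝ) ^ ((j:ℝ) * p)) * fracEnergy n δ p G (fun z => phi j (u z))
      = ∑' j : ℤ, ∫⁻ x in G, ∫⁻ y in G, ENNReal.ofReal ((2:ℝ) ^ ((j:ℝ) * p))
          * fracKernel n δ p (fun z => phi j (u z)) x y ∂volume ∂volume := by
        simp only [h1]
    _ = ∫⁻ x in G, ∑' j : ℤ, ∫⁻ y in G, ENNReal.ofReal ((2:ℝ) ^ ((j:ℝ) * p))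
          * fracKernel n δ p (fun z => phi j (u z)) x y ∂volume ∂volume := by
        rw [← lintegral_tsum]
        intro j
        exact (((hker j).const_mul _).lintegral_prod_right').aemeasurable
    _ = ∫⁻ x in G, ∫⁻ y in G, ∑' j : ℤ, ENNReal.ofReal ((2:ℝ) ^ ((j:ℝ) * p))
          * fracKernel n δ p (fun z => phi j (u z)) x y ∂volume ∂volume := by
        apply lintegral_congr
        intro x
        rw [← lintegral_tsum]
        intro j
        exact (((hker j).comp (measurable_prodMk_left)).const_mul _).aemeasurable
    _ ≤ ∫⁻ x in G, ∫⁻ y in G, ENNReal.ofReal ((2:ℝ) ^ (p + 2) * (1 - (2:ℝ) ^ (-p))⁻¹)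
          * fracKernel n δ p u x y ∂volume ∂volume := by
        apply lintegral_mono
        intro x
        apply lintegral_mono
        intro y
        exact key_kernel hp u x y
    _ = ENNReal.ofReal ((2:ℝ) ^ (p + 2) * (1 - (2:ℝ) ^ (-p))⁻¹) * fracEnergy n δ p G u := by
        rw [fracEnergy, ← lintegral_const_mul' _ _ ENNReal.ofReal_ne_top]
        congr 1
        funext x
        rw [← lintegral_const_mul' _ _ ENNReal.ofReal_ne_top]


lemma tsum_rpow_le {θ : ℝ} (hθ : 1 ≤ θ) (f : ℤ → ℝ≥0∞) :
    ∑' j, f j ^ θ ≤ (∑' j, f j) ^ θ := by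
  set S := ∑' j, f j with hS
  have hθ0 : 0 < θ := lt_of_lt_of_le one_pos hθ
  by_cases hS0 : S = 0
  · have hf0 : ∀ j, f j = 0 := fun j => (ENNReal.tsum_eq_zero.1 hS0) j
    simp [hf0, ENNReal.zero_rpow_of_pos hθ0, hS0]
  by_cases hStop : S = ⊤
  · rw [hStop, ENNReal.top_rpow_of_pos hθ0]
    exact le_top
  have hterm : ∀ j, f j ^ θ ≤ S ^ (θ - 1) * f j := by
    intro j
    by_cases hj : f j = 0
    · simp [hj, ENNReal.zero_rpow_of_pos hθ0]
    · have hjle : f j ≤ S := ENNReal.le_tsum j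
      have hjt : f j ≠ ⊤ := fun h => hStop (top_le_iff.1 (h ▸ hjle))
      have he : f j ^ θ = f j ^ (θ - 1) * f j := by
        have h1 : f j ^ ((θ - 1) + 1) = f j ^ (θ - 1) * f j ^ (1:ℝ) :=
          ENNReal.rpow_add _ _ hj hjt
        rw [sub_add_cancel, ENNReal.rpow_one] at h1
        exact h1
      rw [he]
      exact mul_le_mul' (ENNReal.rpow_le_rpow hjle (by linarith)) le_rfl
  calc ∑' j, f j ^ θ ≤ ∑' j, S ^ (θ - 1) * f j := ENNReal.tsum_le_tsum hterm
    _ = S ^ (θ - 1) * S := by rw [ENNReal.tsum_mul_left]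
    _ = S ^ θ := by
        have h1 : S ^ ((θ - 1) + 1) = S ^ (θ - 1) * S ^ (1:ℝ) :=
          ENNReal.rpow_add _ _ hS0 hStop
        rw [sub_add_cancel, ENNReal.rpow_one] at h1
        exact h1.symm

lemma vj_tsupport {n : ℕ} (u : Eucl n → ℝ) (j : ℤ) :
    tsupport (fun z => phi j (u z)) ⊆ tsupport u := by
  apply closure_mono
  intro x hx
  simp only [Function.mem_support] at hx ⊢
  intro h0
  exact hx (by rw [h0, phi_zero])

lemma cap_le_energy {n : ℕ} {δ p : ℝ} {G : Set (Eucl n)} {u : Eucl n → ℝ}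
    (hu : Continuous u) (hcs : HasCompactSupport u) (hsupp : tsupport u ⊆ G) (j : ℤ) :
    fracCap n δ p {x | (2:ℝ) ^ ((j:ℝ)) ≤ |u x|} G
      ≤ fracEnergy n δ p G (fun z => phi j (u z)) := by
  have hc : Continuous (fun z => phi j (u z)) := (continuous_phi j).comp hu
  have hts : tsupport (fun z => phi j (u z)) ⊆ tsupport u := vj_tsupport u j
  have hcs' : HasCompactSupport (fun z => phi j (u z)) :=
    IsCompact.of_isClosed_subset hcs (isClosed_tsupport _) hts
  have hone : ∀ x ∈ {x | (2:ℝ) ^ ((j:ℝ)) ≤ |u x|}, 1 ≤ phi j (u x) :=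
    fun x hx => (phi_eq_one hx).ge
  exact iInf_le_of_le _ (iInf_le_of_le hc (iInf_le_of_le hcs'
    (iInf_le_of_le (hts.trans hsupp) (iInf_le _ hone))))

lemma Kj_subset_tsupport {n : ℕ} (u : Eucl n → ℝ) (j : ℤ) :
    {x | (2:ℝ) ^ ((j:ℝ)) ≤ |u x|} ⊆ tsupport u := by
  intro x hx
  apply subset_tsupport
  simp only [Function.mem_support]
  intro h0
  simp only [Set.mem_setOf_eq, h0, abs_zero] at hx
  exact absurd hx (not_le.2 (Real.rpow_pos_of_pos two_pos _))

lemma Kj_compact {n : ℕ} {u : Eucl n → ℝ} (hu : Continuous u) (hcs : HasCompactSupport u)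
    (j : ℤ) : IsCompact {x | (2:ℝ) ^ ((j:ℝ)) ≤ |u x|} :=
  IsCompact.of_isClosed_subset hcs (isClosed_le continuous_const hu.abs)
    (Kj_subset_tsupport u j)


lemma directionBA {n : ℕ} {G : Set (Eucl n)} (hG : IsOpen G) {ω : Eucl n → ℝ}
    (hω : Measurable ω) (hω0 : ∀ x, 0 ≤ ω x) {δ p q : ℝ}
    (hp : 0 < p) (hpq : p ≤ q) {C₂ : ℝ} (hC₂ : 0 < C₂)
    (hB : ∀ K : Set (Eucl n), IsCompact K → K ⊆ G →
        (∫⁻ x in K, ENNReal.ofReal (ω x) ∂volume)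
          ≤ ENNReal.ofReal C₂ * fracCap n δ p K G ^ (q / p))
    (u : Eucl n → ℝ) (hu : Continuous u) (hcs : HasCompactSupport u)
    (hsupp : tsupport u ⊆ G) :
    (∫⁻ x in G, ENNReal.ofReal (|u x| ^ q * ω x) ∂volume)
      ≤ ENNReal.ofReal (C₂ * 2 ^ (3 * q + 2 * q / p) * (1 - 2 ^ (-p) : ℝ) ^ (-(q / p))) *
          fracEnergy n δ p G u ^ (q / p) := by
  have hq : 0 < q := lt_of_lt_of_le hp hpq
  have hθ1 : 1 ≤ q / p := (one_le_div hp).2 hpq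
  have hθ0 : (0:ℝ) ≤ q / p := by positivity
  have hGmeas : MeasurableSet G := hG.measurableSet
  have hIlt : (2:ℝ) ^ (-p) < 1 :=
    Real.rpow_lt_one_of_one_lt_of_neg one_lt_two (by linarith)
  have hIpos : (0:ℝ) < 1 - (2:ℝ) ^ (-p) := by linarith
  set θ := q / p with hθ_def
  set K : ℤ → Set (Eucl n) := fun j => {x | (2:ℝ) ^ ((j:ℝ)) ≤ |u x|} with hK_def
  set f : Eucl n → ℝ≥0∞ := fun x => ENNReal.ofReal (|u x| ^ q * ω x) with hf_def
  set U : Set (Eucl n) := ⋃ j : ℤ, (K j \ K (j + 1)) with hU_def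
  have hKmeas : ∀ j : ℤ, MeasurableSet (K j) := fun j =>
    measurableSet_le measurable_const hu.abs.measurable
  have hSmeas : ∀ j : ℤ, MeasurableSet (K j \ K (j + 1)) := fun j =>
    (hKmeas j).diff (hKmeas (j + 1))
  have hzero : ∀ x ∈ G \ U, f x = 0 := by
    intro x hx
    have hxu : u x = 0 := by
      by_contra h0
      apply hx.2
      have ht : 0 < |u x| := abs_pos.2 h0
      set L := Real.logb 2 |u x| with hL
      refine Set.mem_iUnion.2 ⟨⌊L⌋, ?_, ?_⟩
      · show (2:ℝ) ^ ((⌊L⌋:ℝ)) ≤ |u x|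
        calc (2:ℝ) ^ ((⌊L⌋:ℝ)) ≤ (2:ℝ) ^ L :=
              Real.rpow_le_rpow_of_exponent_le one_le_two (Int.floor_le _)
          _ = |u x| := Real.rpow_logb two_pos (by norm_num) ht
      · show ¬ (2:ℝ) ^ ((((⌊L⌋ + 1 : ℤ)):ℝ)) ≤ |u x|
        push_neg
        have he : |u x| = (2:ℝ) ^ L := (Real.rpow_logb two_pos (by norm_num) ht).symm
        rw [he]
        apply Real.rpow_lt_rpow_of_exponent_lt one_lt_two
        push_cast
        exact Int.lt_floor_add_one L
    rw [hf_def]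
    simp [hxu, Real.zero_rpow hq.ne']
  have step1 : (∫⁻ x in G, f x ∂volume)
      ≤ ∑' j : ℤ, ∫⁻ x in G ∩ (K j \ K (j + 1)), f x ∂volume := by
    have hsplit : (∫⁻ x in G, f x ∂volume)
        = ∫⁻ x in (G ∩ U) ∪ (G \ U), f x ∂volume := by
      rw [Set.inter_union_diff]
    rw [hsplit]
    calc ∫⁻ x in (G ∩ U) ∪ (G \ U), f x ∂volume
        ≤ (∫⁻ x in G ∩ U, f x ∂volume) + ∫⁻ x in G \ U, f x ∂volume :=
          lintegral_union_le _ _ _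
      _ = ∫⁻ x in G ∩ U, f x ∂volume := by
          have h0 : (∫⁻ x in G \ U, f x ∂volume) = 0 := by
            have hb : ∀ x ∈ G \ U, f x ≤ 0 := fun x hx => (hzero x hx).le
            have hle : (∫⁻ x in G \ U, f x ∂volume) ≤ 0 :=
              calc ∫⁻ x in G \ U, f x ∂volume
                  ≤ ∫⁻ _ in G \ U, 0 ∂volume :=
                    setLIntegral_mono' (hGmeas.diff (MeasurableSet.iUnion hSmeas)) hb
                _ = 0 := by simp
            exact le_antisymm hle zero_le
          rw [h0, add_zero]
      _ ≤ ∑' j : ℤ, ∫⁻ x in G ∩ (K j \ K (j + 1)), f x ∂volume := by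
          rw [hU_def, Set.inter_iUnion]
          exact lintegral_iUnion_le _ _
  have step2 : ∀ j : ℤ, (∫⁻ x in G ∩ (K j \ K (j + 1)), f x ∂volume)
      ≤ ENNReal.ofReal ((2:ℝ) ^ (((j:ℝ) + 1) * q))
          * ∫⁻ x in K j, ENNReal.ofReal (ω x) ∂volume := by
    intro j
    have hpt : ∀ x ∈ G ∩ (K j \ K (j + 1)), f x
        ≤ ENNReal.ofReal ((2:ℝ) ^ (((j:ℝ) + 1) * q)) * ENNReal.ofReal (ω x) := by
      intro x hx
      have hlt : |u x| < (2:ℝ) ^ ((j:ℝ) + 1) := by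
        have h2 : ¬ (2:ℝ) ^ ((((j + 1 : ℤ)):ℝ)) ≤ |u x| := hx.2.2
        push_neg at h2
        exact_mod_cast h2
      have hb : |u x| ^ q ≤ (2:ℝ) ^ (((j:ℝ) + 1) * q) := by
        calc |u x| ^ q ≤ ((2:ℝ) ^ ((j:ℝ) + 1)) ^ q :=
              Real.rpow_le_rpow (abs_nonneg _) hlt.le hq.le
          _ = (2:ℝ) ^ (((j:ℝ) + 1) * q) := (Real.rpow_mul two_pos.le _ _).symm
      rw [hf_def]
      rw [← ENNReal.ofReal_mul (Real.rpow_nonneg two_pos.le _)]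
      apply ENNReal.ofReal_le_ofReal
      exact mul_le_mul_of_nonneg_right hb (hω0 x)
    calc ∫⁻ x in G ∩ (K j \ K (j + 1)), f x ∂volume
        ≤ ∫⁻ x in G ∩ (K j \ K (j + 1)),
            ENNReal.ofReal ((2:ℝ) ^ (((j:ℝ) + 1) * q)) * ENNReal.ofReal (ω x) ∂volume :=
          setLIntegral_mono' (hGmeas.inter (hSmeas j)) hpt
      _ = ENNReal.ofReal ((2:ℝ) ^ (((j:ℝ) + 1) * q))
            * ∫⁻ x in G ∩ (K j \ K (j + 1)), ENNReal.ofReal (ω x) ∂volume :=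
          lintegral_const_mul' _ _ ENNReal.ofReal_ne_top
      _ ≤ _ := mul_le_mul' le_rfl (lintegral_mono_set (fun x hx => hx.2.1))
  have step3 : ∀ j : ℤ, (∫⁻ x in K j, ENNReal.ofReal (ω x) ∂volume)
      ≤ ENNReal.ofReal C₂ * fracCap n δ p (K j) G ^ θ :=
    fun j => hB (K j) (Kj_compact hu hcs j) ((Kj_subset_tsupport u j).trans hsupp)
  set capj : ℤ → ℝ≥0∞ := fun j => fracCap n δ p (K j) G with hcap_def
  set a : ℤ → ℝ≥0∞ := fun j => ENNReal.ofReal ((2:ℝ) ^ (((j:ℝ) + 1) * p)) * capj j with ha_def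
  have hconv : ∀ j : ℤ,
      ENNReal.ofReal ((2:ℝ) ^ (((j:ℝ) + 1) * q)) * (ENNReal.ofReal C₂ * capj j ^ θ)
        = ENNReal.ofReal C₂ * (a j) ^ θ := by
    intro j
    have h1 : ENNReal.ofReal ((2:ℝ) ^ (((j:ℝ) + 1) * q))
        = (ENNReal.ofReal ((2:ℝ) ^ (((j:ℝ) + 1) * p))) ^ θ := by
      rw [ENNReal.ofReal_rpow_of_pos (Real.rpow_pos_of_pos two_pos _)]
      congr 1
      rw [← Real.rpow_mul two_pos.le]
      congr 1
      rw [hθ_def]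
      field_simp
    simp only [ha_def]
    rw [h1, ENNReal.mul_rpow_of_nonneg _ _ hθ0]
    ring
  have hsuma : ∑' j : ℤ, a j
      ≤ ENNReal.ofReal ((2:ℝ) ^ p * ((2:ℝ) ^ (p + 2) * (1 - (2:ℝ) ^ (-p))⁻¹))
          * fracEnergy n δ p G u := by
    have h1 : ∀ j : ℤ, a j ≤ ENNReal.ofReal ((2:ℝ) ^ p) *
        (ENNReal.ofReal ((2:ℝ) ^ ((j:ℝ) * p))
          * fracEnergy n δ p G (fun z => phi j (u z))) := by
      intro j
      have he : ((j:ℝ) + 1) * p = p + (j:ℝ) * p := by ring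
      have h2 : ENNReal.ofReal ((2:ℝ) ^ (((j:ℝ) + 1) * p))
          = ENNReal.ofReal ((2:ℝ) ^ p) * ENNReal.ofReal ((2:ℝ) ^ ((j:ℝ) * p)) := by
        rw [← ENNReal.ofReal_mul (Real.rpow_nonneg two_pos.le _), ← Real.rpow_add two_pos, he]
      simp only [ha_def]
      rw [h2, mul_assoc]
      exact mul_le_mul' le_rfl (mul_le_mul' le_rfl (cap_le_energy hu hcs hsupp j))
    calc ∑' j : ℤ, a j
        ≤ ∑' j : ℤ, ENNReal.ofReal ((2:ℝ) ^ p) *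
            (ENNReal.ofReal ((2:ℝ) ^ ((j:ℝ) * p))
              * fracEnergy n δ p G (fun z => phi j (u z))) := ENNReal.tsum_le_tsum h1
      _ = ENNReal.ofReal ((2:ℝ) ^ p) * ∑' j : ℤ, ENNReal.ofReal ((2:ℝ) ^ ((j:ℝ) * p))
            * fracEnergy n δ p G (fun z => phi j (u z)) := ENNReal.tsum_mul_left
      _ ≤ ENNReal.ofReal ((2:ℝ) ^ p)
            * (ENNReal.ofReal ((2:ℝ) ^ (p + 2) * (1 - (2:ℝ) ^ (-p))⁻¹)
              * fracEnergy n δ p G u) := mul_le_mul' le_rfl (key_energy hp u hu)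
      _ = _ := by rw [← mul_assoc, ← ENNReal.ofReal_mul (Real.rpow_nonneg two_pos.le _)]
  have hCpos : (0:ℝ) < (2:ℝ) ^ p * ((2:ℝ) ^ (p + 2) * (1 - (2:ℝ) ^ (-p))⁻¹) := by positivity
  have h2 : (∑' j : ℤ, a j) ^ θ
      ≤ ENNReal.ofReal (((2:ℝ) ^ p * ((2:ℝ) ^ (p + 2) * (1 - (2:ℝ) ^ (-p))⁻¹)) ^ θ)
          * fracEnergy n δ p G u ^ θ := by
    calc (∑' j : ℤ, a j) ^ θ
        ≤ (ENNReal.ofReal ((2:ℝ) ^ p * ((2:ℝ) ^ (p + 2) * (1 - (2:ℝ) ^ (-p))⁻¹))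
            * fracEnergy n δ p G u) ^ θ := ENNReal.rpow_le_rpow hsuma hθ0
      _ = (ENNReal.ofReal ((2:ℝ) ^ p * ((2:ℝ) ^ (p + 2) * (1 - (2:ℝ) ^ (-p))⁻¹))) ^ θ
            * fracEnergy n δ p G u ^ θ := ENNReal.mul_rpow_of_nonneg _ _ hθ0
      _ = _ := by rw [ENNReal.ofReal_rpow_of_pos hCpos]
  have hreal : C₂ * (((2:ℝ) ^ p * ((2:ℝ) ^ (p + 2) * (1 - (2:ℝ) ^ (-p))⁻¹)) ^ θ)
      ≤ C₂ * 2 ^ (3 * q + 2 * q / p) * (1 - 2 ^ (-p) : ℝ) ^ (-θ) := by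
    have e1 : (2:ℝ) ^ p * ((2:ℝ) ^ (p + 2) * (1 - (2:ℝ) ^ (-p))⁻¹)
        = (2:ℝ) ^ (2 * p + 2) * (1 - (2:ℝ) ^ (-p))⁻¹ := by
      rw [← mul_assoc, ← Real.rpow_add two_pos]
      ring_nf
    have e2 : (((2:ℝ) ^ (2 * p + 2) * (1 - (2:ℝ) ^ (-p))⁻¹) ^ θ)
        = ((2:ℝ) ^ ((2 * p + 2) * θ)) * ((1 - (2:ℝ) ^ (-p)) ^ (-θ)) := by
      rw [Real.mul_rpow (Real.rpow_nonneg two_pos.le _) (by positivity),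
        ← Real.rpow_mul two_pos.le, Real.inv_rpow hIpos.le, ← Real.rpow_neg hIpos.le]
    have e3 : (2:ℝ) ^ ((2 * p + 2) * θ) ≤ (2:ℝ) ^ (3 * q + 2 * q / p) := by
      apply Real.rpow_le_rpow_of_exponent_le one_le_two
      rw [hθ_def]
      have : (2 * p + 2) * (q / p) = 2 * q + 2 * q / p := by
        field_simp
      rw [this]
      linarith [hq, div_nonneg hq.le hp.le]
    rw [e1, e2]
    have hnn : (0:ℝ) ≤ (1 - (2:ℝ) ^ (-p)) ^ (-θ) := Real.rpow_nonneg hIpos.le _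
    calc C₂ * ((2:ℝ) ^ ((2 * p + 2) * θ) * ((1 - (2:ℝ) ^ (-p)) ^ (-θ)))
        ≤ C₂ * ((2:ℝ) ^ (3 * q + 2 * q / p) * ((1 - (2:ℝ) ^ (-p)) ^ (-θ))) := by
          apply mul_le_mul_of_nonneg_left _ hC₂.le
          exact mul_le_mul_of_nonneg_right e3 hnn
      _ = C₂ * 2 ^ (3 * q + 2 * q / p) * (1 - 2 ^ (-p) : ℝ) ^ (-θ) := by ring
  calc (∫⁻ x in G, f x ∂volume)
      ≤ ∑' j : ℤ, ∫⁻ x in G ∩ (K j \ K (j + 1)), f x ∂volume := step1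
    _ ≤ ∑' j : ℤ, ENNReal.ofReal C₂ * (a j) ^ θ := by
        apply ENNReal.tsum_le_tsum
        intro j
        calc ∫⁻ x in G ∩ (K j \ K (j + 1)), f x ∂volume
            ≤ ENNReal.ofReal ((2:ℝ) ^ (((j:ℝ) + 1) * q))
                * ∫⁻ x in K j, ENNReal.ofReal (ω x) ∂volume := step2 j
          _ ≤ ENNReal.ofReal ((2:ℝ) ^ (((j:ℝ) + 1) * q))
                * (ENNReal.ofReal C₂ * capj j ^ θ) := mul_le_mul' le_rfl (step3 j)
          _ = ENNReal.ofReal C₂ * (a j) ^ θ := hconv j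
    _ = ENNReal.ofReal C₂ * ∑' j : ℤ, (a j) ^ θ := ENNReal.tsum_mul_left
    _ ≤ ENNReal.ofReal C₂ * (∑' j : ℤ, a j) ^ θ := mul_le_mul' le_rfl (tsum_rpow_le hθ1 a)
    _ ≤ ENNReal.ofReal C₂
          * (ENNReal.ofReal (((2:ℝ) ^ p * ((2:ℝ) ^ (p + 2) * (1 - (2:ℝ) ^ (-p))⁻¹)) ^ θ)
            * fracEnergy n δ p G u ^ θ) := mul_le_mul' le_rfl h2
    _ = ENNReal.ofReal (C₂ * (((2:ℝ) ^ p * ((2:ℝ) ^ (p + 2) * (1 - (2:ℝ) ^ (-p))⁻¹)) ^ θ))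
          * fracEnergy n δ p G u ^ θ := by
        rw [← mul_assoc, ← ENNReal.ofReal_mul hC₂.le]
    _ ≤ ENNReal.ofReal (C₂ * 2 ^ (3 * q + 2 * q / p) * (1 - 2 ^ (-p) : ℝ) ^ (-θ))
          * fracEnergy n δ p G u ^ θ :=
        mul_le_mul' (ENNReal.ofReal_le_ofReal hreal) le_rfl


lemma directionAB {n : ℕ} {G : Set (Eucl n)} {ω : Eucl n → ℝ}
    (hω0 : ∀ x, 0 ≤ ω x) {δ p q : ℝ} (hp : 0 < p) (hpq : p ≤ q) {C₁ : ℝ} (hC₁ : 0 < C₁)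
    (hA : ∀ u : Eucl n → ℝ, Continuous u → HasCompactSupport u → tsupport u ⊆ G →
        (∫⁻ x in G, ENNReal.ofReal (|u x| ^ q * ω x) ∂volume)
          ≤ ENNReal.ofReal C₁ * fracEnergy n δ p G u ^ (q / p))
    (K : Set (Eucl n)) (hK : IsCompact K) (hKG : K ⊆ G) :
    (∫⁻ x in K, ENNReal.ofReal (ω x) ∂volume)
      ≤ ENNReal.ofReal C₁ * fracCap n δ p K G ^ (q / p) := by
  have hq : 0 < q := lt_of_lt_of_le hp hpq
  have hθ0 : (0:ℝ) < q / p := by positivity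
  set cap := fracCap n δ p K G with hcap
  set I := ∫⁻ x in K, ENNReal.ofReal (ω x) ∂volume with hI
  have hadm : ∀ u : Eucl n → ℝ, Continuous u → HasCompactSupport u → tsupport u ⊆ G →
      (∀ x ∈ K, 1 ≤ u x) → I ≤ ENNReal.ofReal C₁ * fracEnergy n δ p G u ^ (q / p) := by
    intro u hc hcs hts hone
    have h1 : I ≤ ∫⁻ x in K, ENNReal.ofReal (|u x| ^ q * ω x) ∂volume := by
      apply setLIntegral_mono' hK.measurableSet
      intro x hx
      apply ENNReal.ofReal_le_ofReal
      have h2 : 1 ≤ |u x| := le_trans (hone x hx) (le_abs_self _)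
      have h3 : (1:ℝ) ≤ |u x| ^ q := by
        have := Real.rpow_le_rpow zero_le_one h2 hq.le
        rwa [Real.one_rpow] at this
      nlinarith [hω0 x]
    have h2 : (∫⁻ x in K, ENNReal.ofReal (|u x| ^ q * ω x) ∂volume)
        ≤ ∫⁻ x in G, ENNReal.ofReal (|u x| ^ q * ω x) ∂volume := lintegral_mono_set hKG
    exact le_trans (le_trans h1 h2) (hA u hc hcs hts)
  by_cases hcaptop : cap = ⊤
  · rw [hcaptop, ENNReal.top_rpow_of_pos hθ0,
      ENNReal.mul_top (ENNReal.ofReal_pos.2 hC₁).ne']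
    exact le_top
  have hseq : ∀ k : ℕ, I ≤ ENNReal.ofReal C₁ * (cap + ((k:ℝ≥0∞) + 1)⁻¹) ^ (q / p) := by
    intro k
    have hfin : ((k:ℝ≥0∞) + 1) ≠ ⊤ := by
      simp [ENNReal.add_eq_top]
    have hεpos : (0:ℝ≥0∞) < ((k:ℝ≥0∞) + 1)⁻¹ := ENNReal.inv_pos.2 hfin
    have hlt : cap < cap + ((k:ℝ≥0∞) + 1)⁻¹ :=
      ENNReal.lt_add_right hcaptop hεpos.ne'
    rw [hcap, fracCap] at hlt
    obtain ⟨u, hu⟩ := iInf_lt_iff.1 hlt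
    obtain ⟨hc, hu⟩ := iInf_lt_iff.1 hu
    obtain ⟨hcs, hu⟩ := iInf_lt_iff.1 hu
    obtain ⟨hts, hu⟩ := iInf_lt_iff.1 hu
    obtain ⟨hone, hu⟩ := iInf_lt_iff.1 hu
    calc I ≤ ENNReal.ofReal C₁ * fracEnergy n δ p G u ^ (q / p) := hadm u hc hcs hts hone
      _ ≤ ENNReal.ofReal C₁ * (cap + ((k:ℝ≥0∞) + 1)⁻¹) ^ (q / p) :=
          mul_le_mul' le_rfl (ENNReal.rpow_le_rpow hu.le hθ0.le)
  have htend : Filter.Tendsto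
      (fun k : ℕ => ENNReal.ofReal C₁ * (cap + ((k:ℝ≥0∞) + 1)⁻¹) ^ (q / p))
      Filter.atTop (nhds (ENNReal.ofReal C₁ * cap ^ (q / p))) := by
    have h2 : Filter.Tendsto (fun k : ℕ => (((k + 1 : ℕ)):ℝ≥0∞)⁻¹) Filter.atTop (nhds 0) :=
      ENNReal.tendsto_inv_nat_nhds_zero.comp (Filter.tendsto_add_atTop_nat 1)
    have h2' : Filter.Tendsto (fun k : ℕ => ((k:ℝ≥0∞) + 1)⁻¹) Filter.atTop (nhds 0) := by
      convert h2 using 2 with k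
      push_cast
      ring
    have h1 : Filter.Tendsto (fun k : ℕ => cap + ((k:ℝ≥0∞) + 1)⁻¹) Filter.atTop (nhds cap) := by
      have := Filter.Tendsto.const_add cap h2'
      simpa using this
    have h3 : Filter.Tendsto (fun k : ℕ => (cap + ((k:ℝ≥0∞) + 1)⁻¹) ^ (q / p))
        Filter.atTop (nhds (cap ^ (q / p))) :=
      ((ENNReal.continuous_rpow_const (y := q / p)).continuousAt.tendsto.comp h1)
    exact ENNReal.Tendsto.const_mul h3 (Or.inr ENNReal.ofReal_ne_top)
  exact ge_of_tendsto htend (Filter.Eventually.of_forall hseq)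

end St10

end

/-- Maz'ya-type characterization: for an open `G ⊆ ℝⁿ`, a measurable
weight `ω : G → [0,∞)`, `0 < δ < 1` and `0 < p ≤ q < ∞`, the weighted inequality (A) for
all `u ∈ C₀(G)` and the capacitary inequality (B) for all compact `K ⊆ G` are
equivalent; from (A) to (B) one can take `C₂ = C₁`, and from (B) to (A) one can take
`C₁ = C₂ · 2^{3q + 2q/p} (1 - 2^{-p})^{-q/p}`. -/
theorem statement10 (n : ℕ) (G : Set (Eucl n)) (hG : IsOpen G)
    (ω : Eucl n → ℝ) (hω : Measurable ω) (hω0 : ∀ x, 0 ≤ ω x)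
    (δ p q : ℝ) (hδ : δ ∈ Ioo (0:ℝ) 1) (hp : 0 < p) (hpq : p ≤ q) :
    (∀ C₁ : ℝ, 0 < C₁ →
      (∀ u : Eucl n → ℝ, Continuous u → HasCompactSupport u → tsupport u ⊆ G →
        (∫⁻ x in G, ENNReal.ofReal (|u x| ^ q * ω x) ∂volume)
          ≤ ENNReal.ofReal C₁ * fracEnergy n δ p G u ^ (q / p)) →
      (∀ K : Set (Eucl n), IsCompact K → K ⊆ G →
        (∫⁻ x in K, ENNReal.ofReal (ω x) ∂volume)
          ≤ ENNReal.ofReal C₁ * fracCap n δ p K G ^ (q / p))) ∧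
    (∀ C₂ : ℝ, 0 < C₂ →
      (∀ K : Set (Eucl n), IsCompact K → K ⊆ G →
        (∫⁻ x in K, ENNReal.ofReal (ω x) ∂volume)
          ≤ ENNReal.ofReal C₂ * fracCap n δ p K G ^ (q / p)) →
      (∀ u : Eucl n → ℝ, Continuous u → HasCompactSupport u → tsupport u ⊆ G →
        (∫⁻ x in G, ENNReal.ofReal (|u x| ^ q * ω x) ∂volume)
          ≤ ENNReal.ofReal (C₂ * 2 ^ (3 * q + 2 * q / p) * (1 - 2 ^ (-p) : ℝ) ^ (-(q / p))) *
              fracEnergy n δ p G u ^ (q / p))) := by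
  constructor
  · intro C₁ hC₁ hA K hKcpt hKG
    exact St10.directionAB hω0 hp hpq hC₁ hA K hKcpt hKG
  · intro C₂ hC₂ hB u hu hcs hts
    exact St10.directionBA hG hω hω0 hp hpq hC₂ hB u hu hcs hts
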